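/- Let (W(t), M(t)) be a solution of the synaptic ODE with timescale τ = 1/2 and initial condition (W₀, M₀) ∈ O. Then (W(t), M(t)) ∈ O for all t ≥ 0; that is, the set O of orthonormal neural filters is forward invariant under the flow. -/

import Mathlib

open Matrix Filter
open scoped Matrix

attribute [local instance] Matrix.frobeniusNormedAddCommGroup Matrix.frobeniusNormedSpace

/-- A solution of the synaptic ODE with timescale `τ` on `[0, ∞)`:
a continuously differentiable curve `t ↦ (W t, M t)` staying in the domain `D`
(i.e. `M t` symmetric positive definite) satisfying
`(1/2)·dW/dt = M⁻¹WA − W` and `τ·dM/dt = M⁻¹WAWᵀM⁻¹ − M`. -/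
def IsSynSol {k n : ℕ} (A : Matrix (Fin n) (Fin n) ℝ) (τ : ℝ)
    (W : ℝ → Matrix (Fin k) (Fin n) ℝ) (M : ℝ → Matrix (Fin k) (Fin k) ℝ) : Prop :=
  ∀ t : ℝ, 0 ≤ t →
    (M t).PosDef ∧
    HasDerivWithinAt W ((2 : ℝ) • ((M t)⁻¹ * W t * A - W t)) (Set.Ici 0) t ∧
    HasDerivWithinAt M (τ⁻¹ • ((M t)⁻¹ * W t * A * (W t)ᵀ * (M t)⁻¹ - M t)) (Set.Ici 0) t

section aux
variable {l m p : ℕ}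

lemma isBoundedBilinearMap_matmul :
    IsBoundedBilinearMap ℝ
      (fun q : (Matrix (Fin l) (Fin m) ℝ) × (Matrix (Fin m) (Fin p) ℝ) => q.1 * q.2) where
  add_left x₁ x₂ y := Matrix.add_mul x₁ x₂ y
  smul_left c x y := Matrix.smul_mul c x y
  add_right x y₁ y₂ := Matrix.mul_add x y₁ y₂
  smul_right c x y := Matrix.mul_smul x c y
  bound := ⟨1, one_pos, fun x y => by
    simpa using Matrix.frobenius_norm_mul x y⟩

lemma HasDerivWithinAt.matmul {f : ℝ → Matrix (Fin l) (Fin m) ℝ}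
    {g : ℝ → Matrix (Fin m) (Fin p) ℝ} {f' g'} {s : Set ℝ} {t : ℝ}
    (hf : HasDerivWithinAt f f' s t) (hg : HasDerivWithinAt g g' s t) :
    HasDerivWithinAt (fun u => f u * g u) (f' * g t + f t * g') s t := by
  have h := (isBoundedBilinearMap_matmul.hasFDerivAt (f t, g t)).comp_hasDerivWithinAt t
    (hf.prodMk hg)
  simp only [IsBoundedBilinearMap.deriv_apply] at h
  rw [add_comm]
  exact h

lemma HasDerivWithinAt.mtranspose {f : ℝ → Matrix (Fin l) (Fin m) ℝ} {f'} {s : Set ℝ} {t : ℝ}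
    (hf : HasDerivWithinAt f f' s t) :
    HasDerivWithinAt (fun u => (f u)ᵀ) f'ᵀ s t := by
  have h := (LinearMap.toContinuousLinearMap
    ((Matrix.transposeLinearEquiv (Fin l) (Fin m) ℝ
      ℝ).toLinearMap)).hasFDerivAt.comp_hasDerivWithinAt t hf
  exact h

end aux

/-- The set `O = {(W, M) ∈ D : M⁻¹WWᵀM⁻¹ = I}` of orthonormal neural filters is
forward invariant under the flow of the synaptic ODE with `τ = 1/2`. -/
theorem orthonormal_filters_invariant {k n : ℕ} (hk : 0 < k) (hkn : k < n)
    (A : Matrix (Fin n) (Fin n) ℝ) (hA : A.PosDef)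
    (W₀ : Matrix (Fin k) (Fin n) ℝ) (M₀ : Matrix (Fin k) (Fin k) ℝ) (hM₀ : M₀.PosDef)
    (hO : M₀⁻¹ * (W₀ * W₀ᵀ) * M₀⁻¹ = (1 : Matrix (Fin k) (Fin k) ℝ))
    (W : ℝ → Matrix (Fin k) (Fin n) ℝ) (M : ℝ → Matrix (Fin k) (Fin k) ℝ)
    (hsol : IsSynSol A (1/2 : ℝ) W M) (hW0 : W 0 = W₀) (hM0 : M 0 = M₀) :
    ∀ t : ℝ, 0 ≤ t →
      (M t)⁻¹ * (W t * (W t)ᵀ) * (M t)⁻¹ = (1 : Matrix (Fin k) (Fin k) ℝ) := by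
  -- the key quantity `H = WWᵀ - M²` satisfies `H' = -4H`
  set H : ℝ → Matrix (Fin k) (Fin k) ℝ := fun t => W t * (W t)ᵀ - M t * M t with hH
  have hAT : Aᵀ = A := by
    rw [← Matrix.conjTranspose_eq_transpose_of_trivial]; exact hA.isHermitian.eq
  have hH' : ∀ t : ℝ, 0 ≤ t →
      HasDerivWithinAt H ((-4 : ℝ) • H t) (Set.Ici 0) t := by
    intro t ht
    obtain ⟨hpd, hW', hM'⟩ := hsol t ht
    rw [show ((1 / 2 : ℝ))⁻¹ = (2 : ℝ) by norm_num] at hM'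
    have hdet : IsUnit (M t).det := hpd.det_pos.ne'.isUnit
    have hD := ((hW'.matmul hW'.mtranspose).sub (hM'.matmul hM'))
    convert (show HasDerivWithinAt H _ (Set.Ici 0) t from hD) using 1
    have hMT : (M t)ᵀ = M t := by
      rw [← Matrix.conjTranspose_eq_transpose_of_trivial]; exact hpd.isHermitian.eq
    have hNT : ((M t)⁻¹)ᵀ = (M t)⁻¹ := by
      rw [Matrix.transpose_nonsing_inv, hMT]
    simp only [Matrix.transpose_smul, Matrix.transpose_sub, Matrix.transpose_mul,
      Matrix.transpose_transpose, hAT, hMT, hNT, hH]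
    simp only [Matrix.smul_mul, Matrix.mul_smul, Matrix.sub_mul, Matrix.mul_sub,
      smul_sub, smul_add, smul_smul]
    have c1 : (M t)⁻¹ * W t * A * (W t)ᵀ * (M t)⁻¹ * M t
        = (M t)⁻¹ * W t * A * (W t)ᵀ :=
      Matrix.nonsing_inv_mul_cancel_right _ _ hdet
    have c2 : M t * ((M t)⁻¹ * W t * A * (W t)ᵀ * (M t)⁻¹)
        = W t * A * (W t)ᵀ * (M t)⁻¹ := by
      rw [show (M t)⁻¹ * W t * A * (W t)ᵀ * (M t)⁻¹
          = (M t)⁻¹ * (W t * A * (W t)ᵀ * (M t)⁻¹) by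
        simp only [Matrix.mul_assoc], Matrix.mul_nonsing_inv_cancel_left _ _ hdet]
    rw [c1, c2]
    have c3 : W t * (A * ((W t)ᵀ * (M t)⁻¹)) = W t * A * (W t)ᵀ * (M t)⁻¹ := by
      simp only [Matrix.mul_assoc]
    rw [c3]
    module
  -- `H 0 = 0`
  have hH0 : H 0 = 0 := by
    have hdet0 : IsUnit M₀.det := hM₀.det_pos.ne'.isUnit
    have h1 : M₀ * (M₀⁻¹ * (W₀ * W₀ᵀ) * M₀⁻¹) * M₀ = M₀ * 1 * M₀ := by rw [hO]
    have h2 : W₀ * W₀ᵀ = M₀ * M₀ := by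
      rw [show M₀ * (M₀⁻¹ * (W₀ * W₀ᵀ) * M₀⁻¹) * M₀
          = M₀ * (M₀⁻¹ * ((W₀ * W₀ᵀ) * M₀⁻¹ * M₀)) by simp only [Matrix.mul_assoc],
        Matrix.nonsing_inv_mul_cancel_right _ _ hdet0,
        Matrix.mul_nonsing_inv_cancel_left _ _ hdet0, Matrix.mul_one] at h1
      exact h1
    simp [hH, hW0, hM0, h2]
  -- Gronwall: `H ≡ 0` on `[0, ∞)`
  have hHzero : ∀ t : ℝ, 0 ≤ t → H t = 0 := by
    intro T hT
    have hcont : ContinuousOn H (Set.Icc 0 T) := fun x hx =>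
      ((hH' x hx.1).continuousWithinAt).mono (Set.Icc_subset_Ici_self)
    have key := norm_le_gronwallBound_of_norm_deriv_right_le (f := H)
      (f' := fun t => (-4 : ℝ) • H t) (δ := 0) (K := 4) (ε := 0) (a := 0) (b := T)
      hcont
      (fun x hx => (hH' x hx.1).mono (Set.Ici_subset_Ici.2 hx.1))
      (by simp [hH0])
      (fun x hx => by
        rw [norm_smul]
        simp)
    have := key T (Set.right_mem_Icc.2 hT)
    rw [gronwallBound_ε0_δ0] at this
    exact norm_le_zero_iff.1 this
  -- conclude
  intro t ht
  obtain ⟨hpd, -, -⟩ := hsol t ht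
  have hdet : IsUnit (M t).det := hpd.det_pos.ne'.isUnit
  have hWWt : W t * (W t)ᵀ = M t * M t := by
    have := hHzero t ht
    simpa [hH, sub_eq_zero] using this
  rw [hWWt, show (M t)⁻¹ * (M t * M t) * (M t)⁻¹
      = ((M t)⁻¹ * M t) * (M t * (M t)⁻¹) by simp only [Matrix.mul_assoc],
    Matrix.nonsing_inv_mul _ hdet, Matrix.mul_nonsing_inv _ hdet, Matrix.one_mul]
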